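/- For every x, y in (0,1) there exist normalized confusion matrices for two groups, with all eight entries strictly positive, simultaneously satisfying false positive parity (FPa·y = FPb·x), predictive equality (FNa·TNb = FNb·TNa), and treatment equality (FNa·FPb = FNb·FPa). -/

import Mathlib

theorem stmt
    (x y : ℝ) (hx0 : 0 < x) (hx1 : x < 1) (hy0 : 0 < y) (hy1 : y < 1) :
    ∃ TPa FNa TNa FPa TPb FNb TNb FPb : ℝ,
      0 < TPa ∧ 0 < FNa ∧ 0 < TNa ∧ 0 < FPa ∧
      0 < TPb ∧ 0 < FNb ∧ 0 < TNb ∧ 0 < FPb ∧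
      TPa + FNa = 1 - x ∧ TNa + FPa = x ∧
      TPb + FNb = 1 - y ∧ TNb + FPb = y ∧
      FPa * y = FPb * x ∧ FNa * TNb = FNb * TNa ∧ FNa * FPb = FNb * FPa := by
  set f : ℝ := min ((1 - y) / 2) ((1 - x) * y / (2 * x)) with hf
  have hx1' : (0:ℝ) < 1 - x := by linarith
  have hy1' : (0:ℝ) < 1 - y := by linarith
  have hf0 : 0 < f := lt_min (by linarith) (by positivity)
  have hfy : f ≤ (1 - y) / 2 := min_le_left _ _
  have hfx : f ≤ (1 - x) * y / (2 * x) := min_le_right _ _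
  have hyne : y ≠ 0 := ne_of_gt hy0
  have hFNa : x / y * f ≤ (1 - x) / 2 := by
    rw [div_mul_eq_mul_div, div_le_div_iff₀ hy0 two_pos]
    have := mul_le_mul_of_nonneg_left hfx (le_of_lt hx0)
    rw [mul_div_assoc] at this
    calc x * f * 2 ≤ x * ((1 - x) * y / (2 * x)) * 2 := by nlinarith
      _ = (1 - x) * y := by field_simp
  refine ⟨1 - x - x / y * f, x / y * f, x / 2, x / 2, 1 - y - f, f, y / 2, y / 2,
    by nlinarith [hFNa], by positivity, by positivity, by positivity,
    by linarith, hf0, by positivity, by positivity,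
    by ring, by ring, by ring, by ring, by ring, ?_, ?_⟩ <;> field_simp <;> ring
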